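/- Lemma 4 (explicit lower bound on the averaged leakage reduction): Let X1, X2, Y1 be binary with (X1,X2) ~ DSBS(p) and Y1 = X1 xor N where N ~ Ber(r) is independent of X1, and Y2 empty. Fix the conditional distribution P_{X1,Y1|X2} induced by this model, and let P^{(1)}_{X2} = Ber(q) and P^{(2)}_{X2} = Ber(1-q). For parameters alpha_{2,0}, alpha_{2,1} in [0,1], define the erasure-type mechanism P_{U|X1} with P(U=0|X1=0)=1-alpha_{2,0}, P(U=e|X1=0)=alpha_{2,0}, P(U=1|X1=1)=1-alpha_{2,1}, P(U=e|X1=1)=alpha_{2,1}, define gamma(p,q,r,alpha_{2,0},alpha_{2,1}) = (1-q)*( (1-p)alpha_{2,0} + p alpha_{2,1} )*H( (1-p)alpha_{2,0} / ((1-p)alpha_{2,0} + p alpha_{2,1}) ) + q*( p alpha_{2,0} + (1-p) alpha_{2,1} )*H( p alpha_{2,0} / (p alpha_{2,0} + (1-p) alpha_{2,1}) ), and define C(p,q,r,alpha_{2,0},alpha_{2,1}) = (1-q)((1-p)(1-alpha_{2,0}) + p(1-alpha_{2,1}))H(r) + q(p(1-alpha_{2,0}) + (1-p)(1-alpha_{2,1}))H(r)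 + (1-q)((1-p)alpha_{2,0} + p alpha_{2,1}) H( ((1-p)(1-r)alpha_{2,0} + p r alpha_{2,1}) / ((1-p)alpha_{2,0} + p alpha_{2,1}) ) + q(p alpha_{2,0} + (1-p)alpha_{2,1}) H( (p r alpha_{2,0} + (1-p)(1-r)alpha_{2,1}) / (p alpha_{2,0} + (1-p)alpha_{2,1}) ). If gamma(p,q,r,alpha_{2,0},alpha_{2,1}) <= D, then ( eta^A_1(P_{X1,Y1|X2} P^{(1)}_{X2}, D) + eta^A_1(P_{X1,Y1|X2} P^{(2)}_{X2}, D) ) / 2 >= C(p,q,r,alpha_{2,0},alpha_{2,1}). -/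

import Mathlib

open scoped BigOperators ENNReal

noncomputable section

/-- A probability mass function on a finite type. -/
def IsPMF {α : Type*} [Fintype α] (p : α → ℝ) : Prop :=
  (∀ a, 0 ≤ p a) ∧ ∑ a, p a = 1

/-- Shannon entropy in bits (logarithm base 2). -/
def Hent2 {α : Type*} [Fintype α] (p : α → ℝ) : ℝ :=
  ∑ a, -(p a * Real.logb 2 (p a))

open Classical in
/-- Distribution (pushforward) of a random variable `f` under a joint pmf `q`. -/
def pushf {Ω α : Type*} [Fintype Ω] (q : Ω → ℝ) (f : Ω → α) : α → ℝ :=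
  fun a => ∑ ω, if f ω = a then q ω else 0

/-- Entropy (in bits) of a random variable `f` under joint pmf `q`. -/
def HRV2 {Ω α : Type*} [Fintype Ω] [Fintype α] (q : Ω → ℝ) (f : Ω → α) : ℝ :=
  Hent2 (pushf q f)

/-- Mutual information `I(f;g)` in bits under joint pmf `q`. -/
def MIrv2 {Ω α β : Type*} [Fintype Ω] [Fintype α] [Fintype β]
    (q : Ω → ℝ) (f : Ω → α) (g : Ω → β) : ℝ :=
  HRV2 q f + HRV2 q g - HRV2 q (fun ω => (f ω, g ω))

/-- Conditional entropy `H(f | g)` in bits under joint pmf `q`. -/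
def condEntRV2 {Ω α β : Type*} [Fintype Ω] [Fintype α] [Fintype β]
    (q : Ω → ℝ) (f : Ω → α) (g : Ω → β) : ℝ :=
  HRV2 q (fun ω => (f ω, g ω)) - HRV2 q g

/-- Conditional mutual information `I(f ; g | h)` in bits under joint pmf `q`. -/
def condMIrv2 {Ω α β γ : Type*} [Fintype Ω] [Fintype α] [Fintype β] [Fintype γ]
    (q : Ω → ℝ) (f : Ω → α) (g : Ω → β) (h : Ω → γ) : ℝ :=
  condEntRV2 q f h + condEntRV2 q g h - condEntRV2 q (fun ω => (f ω, g ω)) h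

/-- Binary entropy function (in bits). -/
def binH (t : ℝ) : ℝ := -(t * Real.logb 2 t) - ((1 - t) * Real.logb 2 (1 - t))


/-- Joint pmf of `(X1, Y1, X2)` with `X2 ~ Ber(qq)`, `P_{X1|X2}` the DSBS(p) conditional
(`P(X1 ≠ X2) = p`), and `Y1 = X1 ⊕ N`, `N ~ Ber(r)` independent of `X1`. -/
def joint18 (p r qq : ℝ) : Bool × Bool × Bool → ℝ :=
  fun w => (if w.2.2 then qq else 1 - qq) * (if w.1 = w.2.2 then 1 - p else p) *
    (if w.2.1 = w.1 then 1 - r else r)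

/-- The one-round leakage-reduction function under a log-loss distortion constraint `D`
at agent B: `η^A_1(P, D) = max { H(Y1 | X2, U) : P_{U|X1}, H(X1 | X2, U) ≤ D }`
(over arbitrary finite output alphabets; `⊥` if the constraint is infeasible). -/
def etaA1LL (P : Bool × Bool × Bool → ℝ) (D : ℝ) : EReal :=
  sSup { e : EReal | ∃ (nU : ℕ) (κ : Bool → Fin nU → ℝ)
    (_ : ∀ x v, 0 ≤ κ x v) (_ : ∀ x, ∑ v, κ x v = 1),
    condEntRV2 (fun w : Bool × Bool × Bool × Fin nU =>
        P (w.1, w.2.1, w.2.2.1) * κ w.1 w.2.2.2)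
      (fun w => w.1) (fun w => (w.2.2.1, w.2.2.2)) ≤ D ∧
    e = ((condEntRV2 (fun w : Bool × Bool × Bool × Fin nU =>
        P (w.1, w.2.1, w.2.2.1) * κ w.1 w.2.2.2)
      (fun w => w.2.1) (fun w => (w.2.2.1, w.2.2.2)) : ℝ) : EReal) }

/-- The distortion `γ(p,q,r,α₂₀,α₂₁) = H(X1 | X2, U)` achieved by the erasure-type
mechanism with parameters `(α₂₀, α₂₁)`. -/
def gammaFn (p qq r a0 a1 : ℝ) : ℝ :=
  (1 - qq) * ((1 - p) * a0 + p * a1) * binH ((1 - p) * a0 / ((1 - p) * a0 + p * a1)) +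
  qq * (p * a0 + (1 - p) * a1) * binH (p * a0 / (p * a0 + (1 - p) * a1))

/-- The explicit lower bound `C(p,q,r,α₂₀,α₂₁)`. -/
def CFn (p qq r a0 a1 : ℝ) : ℝ :=
  (1 - qq) * ((1 - p) * (1 - a0) + p * (1 - a1)) * binH r +
  qq * (p * (1 - a0) + (1 - p) * (1 - a1)) * binH r +
  (1 - qq) * ((1 - p) * a0 + p * a1) *
    binH (((1 - p) * (1 - r) * a0 + p * r * a1) / ((1 - p) * a0 + p * a1)) +
  qq * (p * a0 + (1 - p) * a1) *
    binH ((p * r * a0 + (1 - p) * (1 - r) * a1) / (p * a0 + (1 - p) * a1))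


/-! ### Auxiliary lemmas -/

def G (A B : ℝ) : ℝ := (A + B) * binH (A / (A + B))

lemma binH_zero : binH 0 = 0 := by simp [binH]
lemma binH_one : binH 1 = 0 := by simp [binH]
lemma binH_symm (t : ℝ) : binH (1 - t) = binH t := by
  unfold binH; rw [sub_sub_cancel]; ring

lemma keyG (A B : ℝ) (hA : 0 ≤ A) (hB : 0 ≤ B) :
    -(A * Real.logb 2 A) + -(B * Real.logb 2 B) - -((A + B) * Real.logb 2 (A + B)) = G A B := by
  rcases eq_or_lt_of_le hA with hA0 | hA0
  · subst hA0; simp [G, binH]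
  rcases eq_or_lt_of_le hB with hB0 | hB0
  · subst hB0; simp [G, binH, div_self hA0.ne']
  have hS : 0 < A + B := by linarith
  have h1 : 1 - A / (A + B) = B / (A + B) := by field_simp; ring
  unfold G binH
  rw [h1, Real.logb_div hA0.ne' hS.ne', Real.logb_div hB0.ne' hS.ne']
  field_simp
  ring

lemma scaleG (c A B : ℝ) (hc : 0 ≤ c) : G (c * A) (c * B) = c * G A B := by
  rcases eq_or_lt_of_le hc with hc0 | hc0
  · subst hc0; simp [G, binH]
  have h : c * A + c * B = c * (A + B) := by ring
  rw [G, h, mul_div_mul_left A (A + B) hc0.ne', G]; ring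

lemma Gsymm (A B : ℝ) (hA : 0 ≤ A) (hB : 0 ≤ B) : G A B = G B A := by
  rcases eq_or_lt_of_le (by linarith : (0:ℝ) ≤ A + B) with hS | hS
  · have hA0 : A = 0 := by linarith
    have hB0 : B = 0 := by linarith
    simp [hA0, hB0]
  have hS' : B + A ≠ 0 := by linarith
  have h1 : B / (B + A) = 1 - A / (A + B) := by
    rw [add_comm A B]; field_simp; ring
  rw [G, G, h1, binH_symm]; ring

lemma G_zero_left (B : ℝ) : G 0 B = 0 := by
  rw [G, zero_add, zero_div, binH_zero, mul_zero]

lemma G_zero_right (A : ℝ) : G A 0 = 0 := by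
  rcases eq_or_ne A 0 with h | h
  · rw [h, G, add_zero, zero_div, binH_zero, mul_zero]
  · rw [G, add_zero, div_self h, binH_one, mul_zero]

lemma G_one_sub (r : ℝ) : G (1 - r) r = binH r := by
  rw [G, show (1 - r) + r = 1 by ring, div_one, binH_symm, one_mul]

lemma G_one_sub' (r : ℝ) : G r (1 - r) = binH r := by
  rw [G, show r + (1 - r) = 1 by ring, div_one, one_mul]

lemma G_eq_form (A B N S : ℝ) (h1 : A = N) (h2 : A + B = S) :
    G A B = S * binH (N / S) := by
  rw [G, h2, h1]

lemma pushf_nonneg {Ω α : Type*} [Fintype Ω] (q : Ω → ℝ) (hq : ∀ ω, 0 ≤ q ω) (f : Ω → α)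
    (a : α) : 0 ≤ pushf q f a := by
  classical
  apply Finset.sum_nonneg
  intro ω _
  split
  · exact hq ω
  · exact le_refl 0

lemma pushf_marg {Ω α β : Type*} [Fintype Ω] [Fintype α] [Fintype β]
    (q : Ω → ℝ) (f : Ω → α) (g : Ω → β) (b : β) :
    pushf q g b = ∑ a, pushf q (fun ω => (f ω, g ω)) (a, b) := by
  classical
  unfold pushf
  rw [Finset.sum_comm]
  apply Finset.sum_congr rfl
  intro ω _
  simp only [Prod.mk.injEq]
  simp [ite_and, Finset.sum_ite_eq]

lemma condEnt_bool {Ω β : Type*} [Fintype Ω] [Fintype β]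
    (q : Ω → ℝ) (hq : ∀ ω, 0 ≤ q ω) (f : Ω → Bool) (g : Ω → β) :
    condEntRV2 q f g = ∑ b, G (pushf q (fun ω => (f ω, g ω)) (false, b))
      (pushf q (fun ω => (f ω, g ω)) (true, b)) := by
  classical
  unfold condEntRV2 HRV2 Hent2
  rw [Fintype.sum_prod_type]
  rw [Fintype.sum_bool]
  simp only [pushf_marg q f g, Fintype.sum_bool]
  rw [← Finset.sum_add_distrib, ← Finset.sum_sub_distrib]
  apply Finset.sum_congr rfl
  intro b _
  set Jf := pushf q (fun ω => (f ω, g ω)) (false, b) with hJf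
  set Jt := pushf q (fun ω => (f ω, g ω)) (true, b) with hJt
  rw [add_comm Jt Jf]
  have h := keyG Jf Jt (pushf_nonneg q hq _ _) (pushf_nonneg q hq _ _)
  linarith [h]

/-- The erasure-type mechanism. -/
def mech (b0 b1 : ℝ) : Bool → Fin 3 → ℝ :=
  fun x => if x then ![0, 1 - b1, b1] else ![1 - b0, 0, b0]

/-- The joint pmf of `(X1, Y1, X2, U)`. -/
def Q18 (p r qq b0 b1 : ℝ) : Bool × Bool × Bool × Fin 3 → ℝ :=
  fun w => joint18 p r qq (w.1, w.2.1, w.2.2.1) * mech b0 b1 w.1 w.2.2.2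

lemma Q18_nonneg (p r qq b0 b1 : ℝ) (hp0 : 0 ≤ p) (hp1 : p ≤ 1)
    (hr0 : 0 ≤ r) (hr1 : r ≤ 1) (hq0 : 0 ≤ qq) (hq1 : qq ≤ 1)
    (hb00 : 0 ≤ b0) (hb01 : b0 ≤ 1) (hb10 : 0 ≤ b1) (hb11 : b1 ≤ 1) :
    ∀ w, 0 ≤ Q18 p r qq b0 b1 w := by
  intro w
  apply mul_nonneg
  · apply mul_nonneg
    apply mul_nonneg
    all_goals split <;> linarith
  · rcases w with ⟨x, y, z, u⟩
    cases x <;> fin_cases u <;> simp [mech] <;> linarith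

lemma JX_ff0 (p r qq b0 b1 : ℝ) :
    pushf (Q18 p r qq b0 b1) (fun w => (w.1, (w.2.2.1, w.2.2.2))) (false, (false, (0 : Fin 3)))
      = (1 - qq) * ((1 - p) * (1 - b0)) := by simp [pushf, Q18, joint18, mech, Fintype.sum_prod_type, Fin.sum_univ_three, Prod.ext_iff] <;> ring

lemma JX_tf0 (p r qq b0 b1 : ℝ) :
    pushf (Q18 p r qq b0 b1) (fun w => (w.1, (w.2.2.1, w.2.2.2))) (true, (false, (0 : Fin 3)))
      = 0 := by simp [pushf, Q18, joint18, mech, Fintype.sum_prod_type, Fin.sum_univ_three, Prod.ext_iff] <;> ring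

lemma JX_ff1 (p r qq b0 b1 : ℝ) :
    pushf (Q18 p r qq b0 b1) (fun w => (w.1, (w.2.2.1, w.2.2.2))) (false, (false, (1 : Fin 3)))
      = 0 := by simp [pushf, Q18, joint18, mech, Fintype.sum_prod_type, Fin.sum_univ_three, Prod.ext_iff] <;> ring

lemma JX_tf1 (p r qq b0 b1 : ℝ) :
    pushf (Q18 p r qq b0 b1) (fun w => (w.1, (w.2.2.1, w.2.2.2))) (true, (false, (1 : Fin 3)))
      = (1 - qq) * (p * (1 - b1)) := by simp [pushf, Q18, joint18, mech, Fintype.sum_prod_type, Fin.sum_univ_three, Prod.ext_iff] <;> ring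

lemma JX_ff2 (p r qq b0 b1 : ℝ) :
    pushf (Q18 p r qq b0 b1) (fun w => (w.1, (w.2.2.1, w.2.2.2))) (false, (false, (2 : Fin 3)))
      = (1 - qq) * ((1 - p) * b0) := by simp [pushf, Q18, joint18, mech, Fintype.sum_prod_type, Fin.sum_univ_three, Prod.ext_iff] <;> ring

lemma JX_tf2 (p r qq b0 b1 : ℝ) :
    pushf (Q18 p r qq b0 b1) (fun w => (w.1, (w.2.2.1, w.2.2.2))) (true, (false, (2 : Fin 3)))
      = (1 - qq) * (p * b1) := by simp [pushf, Q18, joint18, mech, Fintype.sum_prod_type, Fin.sum_univ_three, Prod.ext_iff] <;> ring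

lemma JX_ft0 (p r qq b0 b1 : ℝ) :
    pushf (Q18 p r qq b0 b1) (fun w => (w.1, (w.2.2.1, w.2.2.2))) (false, (true, (0 : Fin 3)))
      = qq * (p * (1 - b0)) := by simp [pushf, Q18, joint18, mech, Fintype.sum_prod_type, Fin.sum_univ_three, Prod.ext_iff] <;> ring

lemma JX_tt0 (p r qq b0 b1 : ℝ) :
    pushf (Q18 p r qq b0 b1) (fun w => (w.1, (w.2.2.1, w.2.2.2))) (true, (true, (0 : Fin 3)))
      = 0 := by simp [pushf, Q18, joint18, mech, Fintype.sum_prod_type, Fin.sum_univ_three, Prod.ext_iff] <;> ring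

lemma JX_ft1 (p r qq b0 b1 : ℝ) :
    pushf (Q18 p r qq b0 b1) (fun w => (w.1, (w.2.2.1, w.2.2.2))) (false, (true, (1 : Fin 3)))
      = 0 := by simp [pushf, Q18, joint18, mech, Fintype.sum_prod_type, Fin.sum_univ_three, Prod.ext_iff] <;> ring

lemma JX_tt1 (p r qq b0 b1 : ℝ) :
    pushf (Q18 p r qq b0 b1) (fun w => (w.1, (w.2.2.1, w.2.2.2))) (true, (true, (1 : Fin 3)))
      = qq * ((1 - p) * (1 - b1)) := by simp [pushf, Q18, joint18, mech, Fintype.sum_prod_type, Fin.sum_univ_three, Prod.ext_iff] <;> ring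

lemma JX_ft2 (p r qq b0 b1 : ℝ) :
    pushf (Q18 p r qq b0 b1) (fun w => (w.1, (w.2.2.1, w.2.2.2))) (false, (true, (2 : Fin 3)))
      = qq * (p * b0) := by simp [pushf, Q18, joint18, mech, Fintype.sum_prod_type, Fin.sum_univ_three, Prod.ext_iff] <;> ring

lemma JX_tt2 (p r qq b0 b1 : ℝ) :
    pushf (Q18 p r qq b0 b1) (fun w => (w.1, (w.2.2.1, w.2.2.2))) (true, (true, (2 : Fin 3)))
      = qq * ((1 - p) * b1) := by simp [pushf, Q18, joint18, mech, Fintype.sum_prod_type, Fin.sum_univ_three, Prod.ext_iff] <;> ring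

lemma JY_ff0 (p r qq b0 b1 : ℝ) :
    pushf (Q18 p r qq b0 b1) (fun w => (w.2.1, (w.2.2.1, w.2.2.2))) (false, (false, (0 : Fin 3)))
      = (1 - qq) * ((1 - p) * (1 - b0)) * (1 - r) := by simp [pushf, Q18, joint18, mech, Fintype.sum_prod_type, Fin.sum_univ_three, Prod.ext_iff] <;> ring

lemma JY_tf0 (p r qq b0 b1 : ℝ) :
    pushf (Q18 p r qq b0 b1) (fun w => (w.2.1, (w.2.2.1, w.2.2.2))) (true, (false, (0 : Fin 3)))
      = (1 - qq) * ((1 - p) * (1 - b0)) * r := by simp [pushf, Q18, joint18, mech, Fintype.sum_prod_type, Fin.sum_univ_three, Prod.ext_iff] <;> ring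

lemma JY_ff1 (p r qq b0 b1 : ℝ) :
    pushf (Q18 p r qq b0 b1) (fun w => (w.2.1, (w.2.2.1, w.2.2.2))) (false, (false, (1 : Fin 3)))
      = (1 - qq) * (p * (1 - b1)) * r := by simp [pushf, Q18, joint18, mech, Fintype.sum_prod_type, Fin.sum_univ_three, Prod.ext_iff] <;> ring

lemma JY_tf1 (p r qq b0 b1 : ℝ) :
    pushf (Q18 p r qq b0 b1) (fun w => (w.2.1, (w.2.2.1, w.2.2.2))) (true, (false, (1 : Fin 3)))
      = (1 - qq) * (p * (1 - b1)) * (1 - r) := by simp [pushf, Q18, joint18, mech, Fintype.sum_prod_type, Fin.sum_univ_three, Prod.ext_iff] <;> ring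

lemma JY_ff2 (p r qq b0 b1 : ℝ) :
    pushf (Q18 p r qq b0 b1) (fun w => (w.2.1, (w.2.2.1, w.2.2.2))) (false, (false, (2 : Fin 3)))
      = (1 - qq) * ((1 - p) * (1 - r) * b0 + p * r * b1) := by simp [pushf, Q18, joint18, mech, Fintype.sum_prod_type, Fin.sum_univ_three, Prod.ext_iff] <;> ring

lemma JY_tf2 (p r qq b0 b1 : ℝ) :
    pushf (Q18 p r qq b0 b1) (fun w => (w.2.1, (w.2.2.1, w.2.2.2))) (true, (false, (2 : Fin 3)))
      = (1 - qq) * ((1 - p) * r * b0 + p * (1 - r) * b1) := by simp [pushf, Q18, joint18, mech, Fintype.sum_prod_type, Fin.sum_univ_three, Prod.ext_iff] <;> ring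

lemma JY_ft0 (p r qq b0 b1 : ℝ) :
    pushf (Q18 p r qq b0 b1) (fun w => (w.2.1, (w.2.2.1, w.2.2.2))) (false, (true, (0 : Fin 3)))
      = qq * (p * (1 - b0)) * (1 - r) := by simp [pushf, Q18, joint18, mech, Fintype.sum_prod_type, Fin.sum_univ_three, Prod.ext_iff] <;> ring

lemma JY_tt0 (p r qq b0 b1 : ℝ) :
    pushf (Q18 p r qq b0 b1) (fun w => (w.2.1, (w.2.2.1, w.2.2.2))) (true, (true, (0 : Fin 3)))
      = qq * (p * (1 - b0)) * r := by simp [pushf, Q18, joint18, mech, Fintype.sum_prod_type, Fin.sum_univ_three, Prod.ext_iff] <;> ring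

lemma JY_ft1 (p r qq b0 b1 : ℝ) :
    pushf (Q18 p r qq b0 b1) (fun w => (w.2.1, (w.2.2.1, w.2.2.2))) (false, (true, (1 : Fin 3)))
      = qq * ((1 - p) * (1 - b1)) * r := by simp [pushf, Q18, joint18, mech, Fintype.sum_prod_type, Fin.sum_univ_three, Prod.ext_iff] <;> ring

lemma JY_tt1 (p r qq b0 b1 : ℝ) :
    pushf (Q18 p r qq b0 b1) (fun w => (w.2.1, (w.2.2.1, w.2.2.2))) (true, (true, (1 : Fin 3)))
      = qq * ((1 - p) * (1 - b1)) * (1 - r) := by simp [pushf, Q18, joint18, mech, Fintype.sum_prod_type, Fin.sum_univ_three, Prod.ext_iff] <;> ring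

lemma JY_ft2 (p r qq b0 b1 : ℝ) :
    pushf (Q18 p r qq b0 b1) (fun w => (w.2.1, (w.2.2.1, w.2.2.2))) (false, (true, (2 : Fin 3)))
      = qq * (p * (1 - r) * b0 + (1 - p) * r * b1) := by simp [pushf, Q18, joint18, mech, Fintype.sum_prod_type, Fin.sum_univ_three, Prod.ext_iff] <;> ring

lemma JY_tt2 (p r qq b0 b1 : ℝ) :
    pushf (Q18 p r qq b0 b1) (fun w => (w.2.1, (w.2.2.1, w.2.2.2))) (true, (true, (2 : Fin 3)))
      = qq * (p * r * b0 + (1 - p) * (1 - r) * b1) := by simp [pushf, Q18, joint18, mech, Fintype.sum_prod_type, Fin.sum_univ_three, Prod.ext_iff] <;> ring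

lemma condX_closed (p r qq b0 b1 : ℝ) (hp0 : 0 ≤ p) (hp1 : p ≤ 1)
    (hr0 : 0 ≤ r) (hr1 : r ≤ 1) (hq0 : 0 ≤ qq) (hq1 : qq ≤ 1)
    (hb00 : 0 ≤ b0) (hb01 : b0 ≤ 1) (hb10 : 0 ≤ b1) (hb11 : b1 ≤ 1) :
    condEntRV2 (Q18 p r qq b0 b1) (fun w => w.1) (fun w => (w.2.2.1, w.2.2.2))
      = (1 - qq) * G ((1 - p) * b0) (p * b1) + qq * G (p * b0) ((1 - p) * b1) := by
  rw [condEnt_bool (Q18 p r qq b0 b1)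
    (Q18_nonneg p r qq b0 b1 hp0 hp1 hr0 hr1 hq0 hq1 hb00 hb01 hb10 hb11)]
  rw [Fintype.sum_prod_type, Fintype.sum_bool]
  simp only [Fin.sum_univ_three]
  simp only [JX_ff0, JX_tf0, JX_ff1, JX_tf1, JX_ff2, JX_tf2,
    JX_ft0, JX_tt0, JX_ft1, JX_tt1, JX_ft2, JX_tt2]
  simp only [G_zero_left, G_zero_right]
  rw [scaleG qq (p * b0) ((1 - p) * b1) hq0,
      scaleG (1 - qq) ((1 - p) * b0) (p * b1) (by linarith)]
  ring

lemma condY_closed (p r qq b0 b1 : ℝ) (hp0 : 0 ≤ p) (hp1 : p ≤ 1)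
    (hr0 : 0 ≤ r) (hr1 : r ≤ 1) (hq0 : 0 ≤ qq) (hq1 : qq ≤ 1)
    (hb00 : 0 ≤ b0) (hb01 : b0 ≤ 1) (hb10 : 0 ≤ b1) (hb11 : b1 ≤ 1) :
    condEntRV2 (Q18 p r qq b0 b1) (fun w => w.2.1) (fun w => (w.2.2.1, w.2.2.2))
      = (1 - qq) * ((1 - p) * (1 - b0)) * binH r + (1 - qq) * (p * (1 - b1)) * binH r
        + qq * (p * (1 - b0)) * binH r + qq * ((1 - p) * (1 - b1)) * binH r
        + (1 - qq) * G ((1 - p) * (1 - r) * b0 + p * r * b1) ((1 - p) * r * b0 + p * (1 - r) * b1)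
        + qq * G (p * (1 - r) * b0 + (1 - p) * r * b1) (p * r * b0 + (1 - p) * (1 - r) * b1) := by
  rw [condEnt_bool (Q18 p r qq b0 b1)
    (Q18_nonneg p r qq b0 b1 hp0 hp1 hr0 hr1 hq0 hq1 hb00 hb01 hb10 hb11)]
  rw [Fintype.sum_prod_type, Fintype.sum_bool]
  simp only [Fin.sum_univ_three]
  simp only [JY_ff0, JY_tf0, JY_ff1, JY_tf1, JY_ff2, JY_tf2,
    JY_ft0, JY_tt0, JY_ft1, JY_tt1, JY_ft2, JY_tt2]
  rw [scaleG (qq * (p * (1 - b0))) (1 - r) r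
        (by apply mul_nonneg hq0; apply mul_nonneg hp0; linarith),
      scaleG (qq * ((1 - p) * (1 - b1))) r (1 - r)
        (by apply mul_nonneg hq0; apply mul_nonneg <;> linarith),
      scaleG qq (p * (1 - r) * b0 + (1 - p) * r * b1) (p * r * b0 + (1 - p) * (1 - r) * b1) hq0,
      scaleG ((1 - qq) * ((1 - p) * (1 - b0))) (1 - r) r
        (by apply mul_nonneg (by linarith); apply mul_nonneg <;> linarith),
      scaleG ((1 - qq) * (p * (1 - b1))) r (1 - r)
        (by apply mul_nonneg (by linarith); apply mul_nonneg hp0; linarith),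
      scaleG (1 - qq) ((1 - p) * (1 - r) * b0 + p * r * b1) ((1 - p) * r * b0 + p * (1 - r) * b1)
        (by linarith)]
  simp only [G_one_sub, G_one_sub']
  ring

/-- **Lemma 4 (explicit lower bound on the averaged leakage reduction).**  For the
DSBS(p)-based source with `Y1 = X1 ⊕ N`, `N ~ Ber(r)`, the marginals
`P^{(1)}_{X2} = Ber(q)` and `P^{(2)}_{X2} = Ber(1-q)`, and any erasure-type mechanism
parameters `α₂₀, α₂₁ ∈ [0,1]`: if `γ(p,q,r,α₂₀,α₂₁) ≤ D`, then
`(η^A_1(P_{X1,Y1|X2} P^{(1)}_{X2}, D) + η^A_1(P_{X1,Y1|X2} P^{(2)}_{X2}, D)) / 2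
  ≥ C(p,q,r,α₂₀,α₂₁)`. -/
theorem lemma4_averaged_leakage_reduction_lower_bound
    (p qq r D a0 a1 : ℝ)
    (hp : p ∈ Set.Icc (0:ℝ) 1) (hq : qq ∈ Set.Icc (0:ℝ) 1) (hr : r ∈ Set.Icc (0:ℝ) 1)
    (ha0 : a0 ∈ Set.Icc (0:ℝ) 1) (ha1 : a1 ∈ Set.Icc (0:ℝ) 1)
    (hγ : gammaFn p qq r a0 a1 ≤ D) :
    ((2 * CFn p qq r a0 a1 : ℝ) : EReal) ≤
      etaA1LL (joint18 p r qq) D + etaA1LL (joint18 p r (1 - qq)) D := by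
  obtain ⟨hp0, hp1⟩ := hp
  obtain ⟨hq0, hq1⟩ := hq
  obtain ⟨hr0, hr1⟩ := hr
  obtain ⟨ha00, ha01⟩ := ha0
  obtain ⟨ha10, ha11⟩ := ha1
  -- nonnegativity facts
  have n1 : 0 ≤ (1 - p) * (1 - r) * a0 + p * r * a1 := by
    have := mul_nonneg (mul_nonneg (by linarith : (0:ℝ) ≤ 1 - p) (by linarith : (0:ℝ) ≤ 1 - r)) ha00
    have := mul_nonneg (mul_nonneg hp0 hr0) ha10
    linarith
  have n2 : 0 ≤ (1 - p) * r * a0 + p * (1 - r) * a1 := by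
    have := mul_nonneg (mul_nonneg (by linarith : (0:ℝ) ≤ 1 - p) hr0) ha00
    have := mul_nonneg (mul_nonneg hp0 (by linarith : (0:ℝ) ≤ 1 - r)) ha10
    linarith
  have n3 : 0 ≤ p * (1 - r) * a0 + (1 - p) * r * a1 := by
    have := mul_nonneg (mul_nonneg hp0 (by linarith : (0:ℝ) ≤ 1 - r)) ha00
    have := mul_nonneg (mul_nonneg (by linarith : (0:ℝ) ≤ 1 - p) hr0) ha10
    linarith
  have n4 : 0 ≤ p * r * a0 + (1 - p) * (1 - r) * a1 := by
    have := mul_nonneg (mul_nonneg hp0 hr0) ha00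
    have := mul_nonneg (mul_nonneg (by linarith : (0:ℝ) ≤ 1 - p) (by linarith : (0:ℝ) ≤ 1 - r)) ha10
    linarith
  have n5 : 0 ≤ p * (1 - r) * a1 + (1 - p) * r * a0 := by
    have := mul_nonneg (mul_nonneg hp0 (by linarith : (0:ℝ) ≤ 1 - r)) ha10
    have := mul_nonneg (mul_nonneg (by linarith : (0:ℝ) ≤ 1 - p) hr0) ha00
    linarith
  have n6 : 0 ≤ p * r * a1 + (1 - p) * (1 - r) * a0 := by
    have := mul_nonneg (mul_nonneg hp0 hr0) ha10
    have := mul_nonneg (mul_nonneg (by linarith : (0:ℝ) ≤ 1 - p) (by linarith : (0:ℝ) ≤ 1 - r)) ha00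
    linarith
  have npb0 : 0 ≤ p * a0 := mul_nonneg hp0 ha00
  have npb1 : 0 ≤ p * a1 := mul_nonneg hp0 ha10
  have nqb0 : 0 ≤ (1 - p) * a0 := mul_nonneg (by linarith) ha00
  have nqb1 : 0 ≤ (1 - p) * a1 := mul_nonneg (by linarith) ha10
  -- mechanism facts
  have mech_nonneg : ∀ (b0 b1 : ℝ), 0 ≤ b0 → b0 ≤ 1 → 0 ≤ b1 → b1 ≤ 1 →
      ∀ (x : Bool) (v : Fin 3), 0 ≤ mech b0 b1 x v := by
    intro b0 b1 h1 h2 h3 h4 x v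
    cases x <;> fin_cases v <;> simp [mech] <;> linarith
  have mech_sum : ∀ (b0 b1 : ℝ) (x : Bool), ∑ v, mech b0 b1 x v = 1 := by
    intro b0 b1 x
    cases x <;> simp [mech, Fin.sum_univ_three]
  -- instance 1
  have e1 : ((CFn p qq r a0 a1 : ℝ) : EReal) ≤ etaA1LL (joint18 p r qq) D := by
    apply le_sSup
    refine ⟨3, mech a0 a1, mech_nonneg a0 a1 ha00 ha01 ha10 ha11, mech_sum a0 a1, ?_, ?_⟩
    · have hX : condEntRV2 (Q18 p r qq a0 a1) (fun w => w.1) (fun w => (w.2.2.1, w.2.2.2))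
          = gammaFn p qq r a0 a1 := by
        rw [condX_closed p r qq a0 a1 hp0 hp1 hr0 hr1 hq0 hq1 ha00 ha01 ha10 ha11]
        rw [G_eq_form ((1 - p) * a0) (p * a1) ((1 - p) * a0) ((1 - p) * a0 + p * a1) rfl rfl]
        rw [G_eq_form (p * a0) ((1 - p) * a1) (p * a0) (p * a0 + (1 - p) * a1) rfl rfl]
        rw [gammaFn]; ring
      show condEntRV2 (Q18 p r qq a0 a1) (fun w => w.1) (fun w => (w.2.2.1, w.2.2.2)) ≤ D
      rw [hX]; exact hγ
    · have hY : condEntRV2 (Q18 p r qq a0 a1) (fun w => w.2.1) (fun w => (w.2.2.1, w.2.2.2))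
          = CFn p qq r a0 a1 := by
        rw [condY_closed p r qq a0 a1 hp0 hp1 hr0 hr1 hq0 hq1 ha00 ha01 ha10 ha11]
        rw [G_eq_form ((1 - p) * (1 - r) * a0 + p * r * a1) ((1 - p) * r * a0 + p * (1 - r) * a1)
            ((1 - p) * (1 - r) * a0 + p * r * a1) ((1 - p) * a0 + p * a1) rfl (by ring)]
        rw [Gsymm (p * (1 - r) * a0 + (1 - p) * r * a1) (p * r * a0 + (1 - p) * (1 - r) * a1) n3 n4]
        rw [G_eq_form (p * r * a0 + (1 - p) * (1 - r) * a1) (p * (1 - r) * a0 + (1 - p) * r * a1)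
            (p * r * a0 + (1 - p) * (1 - r) * a1) (p * a0 + (1 - p) * a1) rfl (by ring)]
        rw [CFn]; ring
      show ((CFn p qq r a0 a1 : ℝ) : EReal)
        = ((condEntRV2 (Q18 p r qq a0 a1) (fun w => w.2.1) (fun w => (w.2.2.1, w.2.2.2)) : ℝ) : EReal)
      rw [hY]
  -- instance 2
  have e2 : ((CFn p qq r a0 a1 : ℝ) : EReal) ≤ etaA1LL (joint18 p r (1 - qq)) D := by
    apply le_sSup
    refine ⟨3, mech a1 a0, mech_nonneg a1 a0 ha10 ha11 ha00 ha01, mech_sum a1 a0, ?_, ?_⟩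
    · have hX : condEntRV2 (Q18 p r (1 - qq) a1 a0) (fun w => w.1) (fun w => (w.2.2.1, w.2.2.2))
          = gammaFn p qq r a0 a1 := by
        rw [condX_closed p r (1 - qq) a1 a0 hp0 hp1 hr0 hr1 (by linarith) (by linarith)
          ha10 ha11 ha00 ha01]
        rw [Gsymm ((1 - p) * a1) (p * a0) nqb1 npb0,
            Gsymm (p * a1) ((1 - p) * a0) npb1 nqb0]
        rw [G_eq_form (p * a0) ((1 - p) * a1) (p * a0) (p * a0 + (1 - p) * a1) rfl rfl]
        rw [G_eq_form ((1 - p) * a0) (p * a1) ((1 - p) * a0) ((1 - p) * a0 + p * a1) rfl rfl]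
        rw [gammaFn]; ring
      show condEntRV2 (Q18 p r (1 - qq) a1 a0) (fun w => w.1) (fun w => (w.2.2.1, w.2.2.2)) ≤ D
      rw [hX]; exact hγ
    · have hY : condEntRV2 (Q18 p r (1 - qq) a1 a0) (fun w => w.2.1) (fun w => (w.2.2.1, w.2.2.2))
          = CFn p qq r a0 a1 := by
        rw [condY_closed p r (1 - qq) a1 a0 hp0 hp1 hr0 hr1 (by linarith) (by linarith)
          ha10 ha11 ha00 ha01]
        rw [G_eq_form ((1 - p) * (1 - r) * a1 + p * r * a0) ((1 - p) * r * a1 + p * (1 - r) * a0)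
            (p * r * a0 + (1 - p) * (1 - r) * a1) (p * a0 + (1 - p) * a1) (by ring) (by ring)]
        rw [Gsymm (p * (1 - r) * a1 + (1 - p) * r * a0) (p * r * a1 + (1 - p) * (1 - r) * a0) n5 n6]
        rw [G_eq_form (p * r * a1 + (1 - p) * (1 - r) * a0) (p * (1 - r) * a1 + (1 - p) * r * a0)
            ((1 - p) * (1 - r) * a0 + p * r * a1) ((1 - p) * a0 + p * a1) (by ring) (by ring)]
        rw [CFn]; ring
      show ((CFn p qq r a0 a1 : ℝ) : EReal)
        = ((condEntRV2 (Q18 p r (1 - qq) a1 a0) (fun w => w.2.1) (fun w => (w.2.2.1, w.2.2.2)) : ℝ) : EReal)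
      rw [hY]
  have hsplit : ((2 * CFn p qq r a0 a1 : ℝ) : EReal)
      = ((CFn p qq r a0 a1 : ℝ) : EReal) + ((CFn p qq r a0 a1 : ℝ) : EReal) := by
    rw [two_mul, EReal.coe_add]
  rw [hsplit]
  exact add_le_add e1 e2

end
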